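/- Let f : ℤ^r → ℝ be a function such that for each i = 1, …, r the difference x ↦ f(x) − f(x − e_i) is a polynomial function of x ∈ ℤ^r (where e_i is the i-th standard basis vector). Then f itself is a polynomial function on ℤ^r. -/

import Mathlib

open Polynomial

lemma exists_antidiff {A : Type*} [CommRing A] [Algebra ℚ A] (Q : A[X]) :
    ∃ S : A[X], S - S.comp (X - 1) = Q := by
  generalize hd : Q.natDegree = d
  induction d using Nat.strong_induction_on generalizing Q with
  | _ d IH =>
  by_cases hQ0 : Q = 0
  · exact ⟨0, by simp [hQ0]⟩
  subst hd
  set d := Q.natDegree with hd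
  set c := Q.leadingCoeff with hc
  set a : A := ((d+1 : ℚ))⁻¹ • c with ha
  set T : A[X] := X ^ (d+1) - (X - 1) ^ (d+1) with hT
  have hcomp : ((a • X ^ (d+1) : A[X])) - ((a • X ^ (d+1) : A[X])).comp (X - 1) = a • T := by
    simp [hT, smul_sub, Polynomial.smul_comp, Polynomial.pow_comp, Polynomial.X_comp]
  have hTcoeff : ∀ k, T.coeff k = (if k = d+1 then 1 else 0) -
      (-1) ^ (d+1-k) * ((d+1).choose k : A) := by
    intro k
    have : ((X - 1 : A[X])) = X + C (-1) := by simp [sub_eq_add_neg]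
    rw [hT, Polynomial.coeff_sub, this, Polynomial.coeff_X_add_C_pow, Polynomial.coeff_X_pow]
  have hTdeg : T.natDegree ≤ d := by
    rw [Polynomial.natDegree_le_iff_coeff_eq_zero]
    intro N hN
    rw [hTcoeff]
    rcases eq_or_ne N (d+1) with h | h
    · subst h; simp
    · have : d + 1 < N := lt_of_le_of_ne hN (Ne.symm h)
      simp [h, Nat.choose_eq_zero_of_lt this]
  have hTd : T.coeff d = ((d+1 : ℕ) : A) := by
    rw [hTcoeff]
    have h1 : d ≠ d + 1 := by omega
    have h2 : d + 1 - d = 1 := by omega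
    simp [h1, h2]
  set R : A[X] := Q - a • T with hR
  have hRd : R.coeff d = 0 := by
    rw [hR, Polynomial.coeff_sub, Polynomial.coeff_smul, hTd]
    have : a • ((d+1 : ℕ) : A) = c := by
      rw [ha, smul_eq_mul, smul_mul_assoc]
      rw [show (((d+1 : ℕ) : A)) = ((d+1:ℚ)) • (1:A) by
        push_cast
        simp [Algebra.smul_def]]
      rw [mul_smul_comm, smul_smul, inv_mul_cancel₀ (by positivity), one_smul, mul_one]
    rw [this]
    exact sub_eq_zero_of_eq rfl
  have hRdeg : R.natDegree ≤ d := by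
    apply le_trans (Polynomial.natDegree_sub_le _ _)
    simp only [max_le_iff]
    exact ⟨le_refl _, le_trans (Polynomial.natDegree_smul_le _ _) hTdeg⟩
  rcases eq_or_ne R 0 with hR0 | hR0
  · refine ⟨a • X ^ (d+1), ?_⟩
    rw [hcomp]
    have hQT : Q = a • T := by
      have := hR0
      rw [hR, sub_eq_zero] at this
      exact this
    exact hQT.symm
  · have hRlt : R.natDegree < d := by
      rcases lt_or_eq_of_le hRdeg with h | h
      · exact h
      · exfalso
        exact hR0 (Polynomial.leadingCoeff_eq_zero.mp (by rw [Polynomial.leadingCoeff, h, hRd]))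
    obtain ⟨S₁, hS₁⟩ := IH R.natDegree hRlt R rfl
    refine ⟨a • X ^ (d+1) + S₁, ?_⟩
    rw [Polynomial.add_comp]
    have : a • X ^ (d+1) + S₁ - ((a • X ^ (d+1)).comp (X-1) + S₁.comp (X-1))
        = (a • X ^ (d+1) - (a • X ^ (d+1)).comp (X-1)) + (S₁ - S₁.comp (X-1)) := by ring
    rw [this, hcomp, hS₁, hR]
    ring

lemma aeval_eq_eval_real {σ' : Type*} (g' : σ' → ℝ) (p : MvPolynomial σ' ℝ) :
    MvPolynomial.aeval g' p = MvPolynomial.eval g' p := by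
  rw [← MvPolynomial.coe_aeval_eq_eval]
  rfl

open MvPolynomial in
lemma eval_bind1_real {σ τ : Type*} (g : τ → ℝ) (u : σ → MvPolynomial τ ℝ)
    (φ : MvPolynomial σ ℝ) :
    eval g (bind₁ u φ) = eval (fun i => eval g (u i)) φ := by
  have h := aeval_bind₁ (S := ℝ) g u φ
  simp only [aeval_eq_eval_real] at h
  exact h

theorem stmt2aux : ∀ (r : ℕ) (f : (Fin r → ℤ) → ℝ),
    (∀ i : Fin r, ∃ P : MvPolynomial (Fin r) ℝ, ∀ x : Fin r → ℤ,
      f x - f (x - Pi.single i 1) = MvPolynomial.eval (fun j => (x j : ℝ)) P) →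
    ∃ P : MvPolynomial (Fin r) ℝ, ∀ x : Fin r → ℤ,
      f x = MvPolynomial.eval (fun j => (x j : ℝ)) P := by
  intro r
  induction r with
  | zero =>
    intro f _
    refine ⟨MvPolynomial.C (f 0), fun x => ?_⟩
    have hx : x = 0 := Subsingleton.elim x 0
    rw [hx, MvPolynomial.eval_C]
  | succ r IH =>
    intro f hdiff
    obtain ⟨P0, hP0⟩ := hdiff 0
    set E := MvPolynomial.finSuccEquiv ℝ r with hE
    obtain ⟨S, hS⟩ := exists_antidiff (E P0)
    set Sm : MvPolynomial (Fin (r+1)) ℝ := E.symm S with hSmdef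
    have hES : E Sm = S := E.apply_symm_apply S
    have coe_cons : ∀ (n : ℤ) (y : Fin r → ℤ),
        (fun j => ((Fin.cons n y : Fin (r+1) → ℤ) j : ℝ))
          = Fin.cons (n : ℝ) (fun i => (y i : ℝ)) := by
      intro n y
      funext j
      refine Fin.cases ?_ (fun i => ?_) j <;> simp
    have evalM : ∀ (M : MvPolynomial (Fin (r+1)) ℝ) (n : ℤ) (y : Fin r → ℤ),
        MvPolynomial.eval (fun j => ((Fin.cons n y : Fin (r+1) → ℤ) j : ℝ)) M
          = Polynomial.eval (n : ℝ) ((E M).map (MvPolynomial.eval fun i => (y i : ℝ))) := by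
      intro M n y
      rw [coe_cons]
      exact MvPolynomial.eval_eq_eval_mv_eval' _ _ M
    have key : ∀ (n : ℤ) (y : Fin r → ℤ),
        MvPolynomial.eval (fun j => ((Fin.cons n y : Fin (r+1) → ℤ) j : ℝ)) Sm
          - MvPolynomial.eval (fun j => ((Fin.cons (n-1) y : Fin (r+1) → ℤ) j : ℝ)) Sm
          = MvPolynomial.eval (fun j => ((Fin.cons n y : Fin (r+1) → ℤ) j : ℝ)) P0 := by
      intro n y
      rw [evalM, evalM, evalM, hES]
      set ev := MvPolynomial.eval (fun i => ((y i : ℝ))) with hev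
      have h2 : (S.map ev) - ((S.map ev).comp (Polynomial.X - 1)) = (E P0).map ev := by
        have h3 := congrArg (Polynomial.map ev) hS
        rwa [Polynomial.map_sub, Polynomial.map_comp, Polynomial.map_sub,
          Polynomial.map_X, Polynomial.map_one] at h3
      have h4 := congrArg (Polynomial.eval ((n : ℝ))) h2
      rw [Polynomial.eval_sub, Polynomial.eval_comp, Polynomial.eval_sub,
        Polynomial.eval_X, Polynomial.eval_one] at h4
      push_cast
      exact h4
    have cons_sub0 : ∀ (n : ℤ) (y : Fin r → ℤ),
        (Fin.cons n y : Fin (r+1) → ℤ) - Pi.single 0 1 = Fin.cons (n-1) y := by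
      intro n y
      funext j
      refine Fin.cases ?_ (fun i => ?_) j
      · simp
      · simp [Pi.single_eq_of_ne (Fin.succ_ne_zero i)]
    set g : (Fin (r+1) → ℤ) → ℝ :=
      fun x => f x - MvPolynomial.eval (fun j => (x j : ℝ)) Sm with hgdef
    have hgstep : ∀ (n : ℤ) (y : Fin r → ℤ), g (Fin.cons n y) = g (Fin.cons (n-1) y) := by
      intro n y
      have h1 := hP0 (Fin.cons n y)
      rw [cons_sub0] at h1
      have h2 := key n y
      simp only [hgdef]
      linarith [h1, h2]
    have hconst : ∀ (y : Fin r → ℤ) (n : ℤ), g (Fin.cons n y) = g (Fin.cons 0 y) := by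
      intro y n
      induction n using Int.induction_on with
      | zero => rfl
      | succ k ih =>
        rw [← ih]
        have h5 := hgstep ((k : ℤ) + 1) y
        simpa using h5
      | pred k ih =>
        rw [← ih]
        have h5 := hgstep (-(k : ℤ)) y
        exact h5.symm
    set hfun : (Fin r → ℤ) → ℝ := fun y => g (Fin.cons 0 y) with hhdef
    have hfx : ∀ x : Fin (r+1) → ℤ,
        f x = MvPolynomial.eval (fun j => (x j : ℝ)) Sm + hfun (Fin.tail x) := by
      intro x
      have h1 : g x = hfun (Fin.tail x) := by
        have hx : x = Fin.cons (x 0) (Fin.tail x) := (Fin.cons_self_tail x).symm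
        calc g x = g (Fin.cons (x 0) (Fin.tail x)) := by rw [← hx]
        _ = g (Fin.cons 0 (Fin.tail x)) := hconst _ _
      simp only [hgdef] at h1
      linarith [h1]
    have eval0 : ∀ (M : MvPolynomial (Fin (r+1)) ℝ) (y : Fin r → ℤ),
        MvPolynomial.eval (fun j => ((Fin.cons (0:ℤ) y : Fin (r+1) → ℤ) j : ℝ)) M
          = MvPolynomial.eval (fun i => (y i : ℝ)) ((E M).coeff 0) := by
      intro M y
      rw [evalM]
      push_cast
      rw [← Polynomial.coeff_zero_eq_eval_zero, Polynomial.coeff_map]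
    have hdiffh : ∀ i : Fin r, ∃ P : MvPolynomial (Fin r) ℝ, ∀ y : Fin r → ℤ,
        hfun y - hfun (y - Pi.single i 1) = MvPolynomial.eval (fun j => (y j : ℝ)) P := by
      intro i
      obtain ⟨P', hP'⟩ := hdiff i.succ
      set u : Fin r → MvPolynomial (Fin r) ℝ :=
        fun j => if j = i then MvPolynomial.X j - 1 else MvPolynomial.X j with hu
      have shift : ∀ (N : MvPolynomial (Fin r) ℝ) (y : Fin r → ℤ),
          MvPolynomial.eval (fun j => (((y - Pi.single i 1 : Fin r → ℤ)) j : ℝ)) N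
            = MvPolynomial.eval (fun j => (y j : ℝ)) (MvPolynomial.bind₁ u N) := by
        intro N y
        rw [eval_bind1_real]
        have hpt : (fun j => (((y - Pi.single i 1 : Fin r → ℤ)) j : ℝ))
            = fun j => MvPolynomial.eval (fun j' => (y j' : ℝ)) (u j) := by
          funext j
          simp only [hu]
          by_cases hji : j = i
          · subst hji
            simp [Pi.single_eq_same]
          · simp [hji, Pi.single_eq_of_ne hji]
        rw [hpt]
      have cons_subs : ∀ (y : Fin r → ℤ),
          (Fin.cons 0 (y - Pi.single i 1) : Fin (r+1) → ℤ)
            = (Fin.cons 0 y : Fin (r+1) → ℤ) - Pi.single i.succ 1 := by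
        intro y
        funext j
        refine Fin.cases ?_ (fun k => ?_) j
        · simp [Pi.single_eq_of_ne (Fin.succ_ne_zero i).symm]
        · simp [Pi.single_apply, Fin.succ_inj]
      refine ⟨(E P').coeff 0 - S.coeff 0 + MvPolynomial.bind₁ u (S.coeff 0), fun y => ?_⟩
      have hf1 := hP' (Fin.cons (0:ℤ) y)
      rw [← cons_subs y] at hf1
      have e1 := eval0 P' y
      have e2 := eval0 Sm y
      have e3 := eval0 Sm (y - Pi.single i 1)
      rw [hES] at e2 e3
      have e4 := shift (S.coeff 0) y
      simp only [hhdef, hgdef]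
      rw [map_add, map_sub]
      have hfp : f (Fin.cons (0:ℤ) y) - f (Fin.cons (0:ℤ) (y - Pi.single i 1))
          = MvPolynomial.eval (fun i => (y i : ℝ)) ((E P').coeff 0) := by
        rw [← e1]; exact hf1
      linarith [hfp, e2, e3, e4]
    obtain ⟨H, hH⟩ := IH hfun hdiffh
    refine ⟨Sm + MvPolynomial.rename Fin.succ H, fun x => ?_⟩
    rw [map_add, MvPolynomial.eval_rename, hfx x, hH (Fin.tail x)]
    rfl


/-- If `f : ℤ^r → ℝ` is such that for each `i` the difference
`x ↦ f(x) − f(x − eᵢ)` is a polynomial function of `x ∈ ℤ^r` (where `eᵢ` is the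
`i`-th standard basis vector), then `f` itself is a polynomial function on `ℤ^r`,
i.e. there is `P ∈ ℝ[X₁,…,X_r]` with `f(x) = P(x)` for all `x ∈ ℤ^r`. -/
theorem stmt2 {r : ℕ} (f : (Fin r → ℤ) → ℝ)
    (hdiff : ∀ i : Fin r, ∃ P : MvPolynomial (Fin r) ℝ, ∀ x : Fin r → ℤ,
      f x - f (x - Pi.single i 1) = MvPolynomial.eval (fun j => (x j : ℝ)) P) :
    ∃ P : MvPolynomial (Fin r) ℝ, ∀ x : Fin r → ℤ,
      f x = MvPolynomial.eval (fun j => (x j : ℝ)) P := by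
  exact stmt2aux r f hdiff
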